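/- Every well-filtered T0 space is open well-filtered. -/

import Mathlib

open Set

def RelCpt {X : Type*} [TopologicalSpace X] (A B : Set X) : Prop :=
  A ⊆ B ∧ ∀ 𝒰 : Set (Set X), (∀ U ∈ 𝒰, IsOpen U) → B ⊆ ⋃₀ 𝒰 →
    ∃ 𝒱 ⊆ 𝒰, 𝒱.Finite ∧ A ⊆ ⋃₀ 𝒱

def Saturated {X : Type*} [TopologicalSpace X] (A : Set X) : Prop :=
  A = ⋂₀ {U : Set X | IsOpen U ∧ A ⊆ U}

def WellFiltered (X : Type*) [TopologicalSpace X] : Prop :=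
  ∀ 𝒦 : Set (Set X), 𝒦.Nonempty →
    (∀ K ∈ 𝒦, IsCompact K ∧ Saturated K) →
    (∀ K₁ ∈ 𝒦, ∀ K₂ ∈ 𝒦, ∃ K₃ ∈ 𝒦, K₃ ⊆ K₁ ∧ K₃ ⊆ K₂) →
    ∀ U : Set X, IsOpen U → ⋂₀ 𝒦 ⊆ U → ∃ K ∈ 𝒦, K ⊆ U

def OmegaWellFiltered (X : Type*) [TopologicalSpace X] : Prop :=
  ∀ K : ℕ → Set X, (∀ n, IsCompact (K n) ∧ Saturated (K n)) →
    (∀ m n : ℕ, ∃ k, K k ⊆ K m ∧ K k ⊆ K n) →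
    ∀ U : Set X, IsOpen U → (⋂ n, K n) ⊆ U → ∃ n, K n ⊆ U

def SatWellFiltered (X : Type*) [TopologicalSpace X] : Prop :=
  ∀ 𝒜 : Set (Set X), 𝒜.Nonempty →
    (∀ A ∈ 𝒜, Saturated A) →
    (∀ A₁ ∈ 𝒜, ∀ A₂ ∈ 𝒜, ∃ A₃ ∈ 𝒜, RelCpt A₃ A₁ ∧ RelCpt A₃ A₂) →
    ∀ U : Set X, IsOpen U → ⋂₀ 𝒜 ⊆ U → ∃ A ∈ 𝒜, A ⊆ U

def SatOmegaWellFiltered (X : Type*) [TopologicalSpace X] : Prop :=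
  ∀ A : ℕ → Set X, (∀ n, Saturated (A n)) →
    (∀ m n : ℕ, ∃ k, RelCpt (A k) (A m) ∧ RelCpt (A k) (A n)) →
    ∀ U : Set X, IsOpen U → (⋂ n, A n) ⊆ U → ∃ n, A n ⊆ U

def OpenWellFiltered (X : Type*) [TopologicalSpace X] : Prop :=
  ∀ 𝒜 : Set (Set X), 𝒜.Nonempty →
    (∀ A ∈ 𝒜, IsOpen A) →
    (∀ A₁ ∈ 𝒜, ∀ A₂ ∈ 𝒜, ∃ A₃ ∈ 𝒜, RelCpt A₃ A₁ ∧ RelCpt A₃ A₂) →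
    ∀ U : Set X, IsOpen U → ⋂₀ 𝒜 ⊆ U → ∃ A ∈ 𝒜, A ⊆ U

def OpenOmegaWellFiltered (X : Type*) [TopologicalSpace X] : Prop :=
  ∀ A : ℕ → Set X, (∀ n, IsOpen (A n)) →
    (∀ m n : ℕ, ∃ k, RelCpt (A k) (A m) ∧ RelCpt (A k) (A n)) →
    ∀ U : Set X, IsOpen U → (⋂ n, A n) ⊆ U → ∃ n, A n ⊆ U

def CoreCompact (X : Type*) [TopologicalSpace X] : Prop :=
  ∀ (x : X) (U : Set X), IsOpen U → x ∈ U → ∃ V : Set X, IsOpen V ∧ x ∈ V ∧ RelCpt V U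

def Sober (X : Type*) [TopologicalSpace X] : Prop :=
  ∀ F : Set X, IsClosed F → F.Nonempty →
    (∀ F₁ F₂ : Set X, IsClosed F₁ → IsClosed F₂ → F ⊆ F₁ ∪ F₂ → F ⊆ F₁ ∨ F ⊆ F₂) →
    ∃! x : X, F = closure {x}

section OWFHelpers
variable {X : Type*} [TopologicalSpace X]

def OWFsat (S : Set X) : Set X := ⋂₀ {U : Set X | IsOpen U ∧ S ⊆ U}

lemma OWFsat_superset (S : Set X) : S ⊆ OWFsat S := fun _ hx =>
  mem_sInter.mpr fun _ hU => hU.2 hx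

lemma OWFsat_subset {S V : Set X} (hV : IsOpen V) (h : S ⊆ V) : OWFsat S ⊆ V :=
  sInter_subset_of_mem ⟨hV, h⟩

lemma OWFsat_saturated (S : Set X) : Saturated (OWFsat S) := by
  apply Set.Subset.antisymm
  · intro x hx
    exact mem_sInter.mpr fun U hU => hU.2 hx
  · intro x hx
    refine mem_sInter.mpr fun U hU => ?_
    exact mem_sInter.mp hx U ⟨hU.1, OWFsat_subset hU.1 hU.2⟩

lemma OWF_elim_scover {K : Set X} (hK : IsCompact K) {𝒰 : Set (Set X)}
    (h𝒰 : ∀ U ∈ 𝒰, IsOpen U) (hcov : K ⊆ ⋃₀ 𝒰) :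
    ∃ 𝒱 ⊆ 𝒰, 𝒱.Finite ∧ K ⊆ ⋃₀ 𝒱 := by
  rw [sUnion_eq_biUnion] at hcov
  obtain ⟨𝒱, h1, h2, h3⟩ := hK.elim_finite_subcover_image h𝒰 hcov
  refine ⟨𝒱, h1, h2, ?_⟩
  rwa [sUnion_eq_biUnion]

lemma OWF_isCompact_of_scover {K : Set X}
    (h : ∀ 𝒰 : Set (Set X), (∀ U ∈ 𝒰, IsOpen U) → K ⊆ ⋃₀ 𝒰 →
      ∃ 𝒱 ⊆ 𝒰, 𝒱.Finite ∧ K ⊆ ⋃₀ 𝒱) : IsCompact K := by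
  classical
  apply isCompact_of_finite_subcover
  intro ι U hUo hcov
  obtain ⟨𝒱, h𝒱sub, h𝒱fin, h𝒱cov⟩ := h (range U)
    (by rintro _ ⟨i, rfl⟩; exact hUo i) (by rwa [sUnion_range])
  have hch : ∀ V : 𝒱, ∃ i, U i = (V : Set X) := fun V => h𝒱sub V.2
  choose g hg using hch
  have : Fintype 𝒱 := h𝒱fin.fintype
  refine ⟨Finset.univ.image g, ?_⟩
  intro x hx
  obtain ⟨V, hV𝒱, hxV⟩ := h𝒱cov hx
  refine mem_biUnion (Finset.mem_image.mpr ⟨⟨V, hV𝒱⟩, Finset.mem_univ _, rfl⟩) ?_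
  rw [hg ⟨V, hV𝒱⟩]; exact hxV

lemma OWFsat_compact {S : Set X} (hS : IsCompact S) : IsCompact (OWFsat S) := by
  apply OWF_isCompact_of_scover
  intro 𝒰 h𝒰 hcov
  obtain ⟨𝒱, hsub, hfin, hc⟩ := OWF_elim_scover hS h𝒰 ((OWFsat_superset S).trans hcov)
  exact ⟨𝒱, hsub, hfin, OWFsat_subset (isOpen_sUnion fun U hU => h𝒰 U (hsub hU)) hc⟩

lemma RelCpt_mono {A B C : Set X} (h : RelCpt A B) (hBC : B ⊆ C) : RelCpt A C :=
  ⟨h.1.trans hBC, fun 𝒰 ho hc => h.2 𝒰 ho (hBC.trans hc)⟩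

/-- Key ω-lemma: in a well-filtered space, a `RelCpt`-descending chain of opens
has the "Hofmann–Mislove detection" property. -/
lemma OWF_omega (hWF : WellFiltered X) (W : ℕ → Set X)
    (hWo : ∀ n, IsOpen (W n)) (hrel : ∀ n, RelCpt (W (n + 1)) (W n))
    (V : Set X) (hV : IsOpen V) (hsub : (⋂ n, W n) ⊆ V) :
    ∃ n, W n ⊆ V := by
  by_contra hcon
  push_neg at hcon
  -- hcon : ∀ n, ¬ W n ⊆ V
  have hanti : ∀ {m n : ℕ}, m ≤ n → W n ⊆ W m := by
    intro m n h
    induction h with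
    | refl => exact Subset.rfl
    | step h ih => exact (hrel _).1.trans ih
  -- the family of closed sets avoiding V and meeting every W n
  set 𝒞 : Set (Set X) := {C | IsClosed C ∧ C ⊆ Vᶜ ∧ ∀ n, (C ∩ W n).Nonempty} with h𝒞
  have hseed : Vᶜ ∈ 𝒞 := by
    refine ⟨hV.isClosed_compl, Subset.rfl, fun n => ?_⟩
    obtain ⟨x, hx1, hx2⟩ := not_subset.mp (hcon n)
    exact ⟨x, hx2, hx1⟩
  -- Zorn: minimal member of 𝒞
  have hzorn : ∀ c ⊆ 𝒞, IsChain (· ⊆ ·) c → c.Nonempty →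
      ∃ lb ∈ 𝒞, ∀ s ∈ c, lb ⊆ s := by
    intro c hc𝒞 hchain hcne
    refine ⟨⋂₀ c, ⟨isClosed_sInter fun C hC => (hc𝒞 hC).1, ?_, ?_⟩,
      fun s hs => sInter_subset_of_mem hs⟩
    · obtain ⟨C₀, hC₀⟩ := hcne
      exact (sInter_subset_of_mem hC₀).trans (hc𝒞 hC₀).2.1
    · intro n
      by_contra hemp
      rw [not_nonempty_iff_eq_empty] at hemp
      -- cover W n by complements of members of the chain
      have hcov : W n ⊆ ⋃₀ (compl '' c) := by
        intro x hx
        have hxlb : x ∉ ⋂₀ c := by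
          intro hxl
          exact absurd (mem_inter hxl hx) (by simp [hemp])
        obtain ⟨C, hCc, hxC⟩ := by
          simpa [mem_sInter, not_forall] using hxlb
        exact ⟨Cᶜ, mem_image_of_mem _ hCc, hxC⟩
      obtain ⟨𝒱, h𝒱sub, h𝒱fin, h𝒱cov⟩ := (hrel n).2 (compl '' c)
        (by rintro _ ⟨C, hCc, rfl⟩; exact (hc𝒞 hCc).1.isOpen_compl) hcov
      -- extract the chain members whose complements appear in 𝒱
      set c' : Set (Set X) := {C ∈ c | Cᶜ ∈ 𝒱} with hc'
      have hc'fin : c'.Finite := by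
        apply Set.Finite.subset (h𝒱fin.image compl)
        rintro C ⟨hCc, hC𝒱⟩
        exact ⟨Cᶜ, hC𝒱, compl_compl C⟩
      have hc'ne : c'.Nonempty := by
        obtain ⟨x, hx1, hx2⟩ := not_subset.mp (hcon (n + 1))
        obtain ⟨D, hD𝒱, hxD⟩ := h𝒱cov hx1
        obtain ⟨C, hCc, rfl⟩ := h𝒱sub hD𝒱
        exact ⟨C, hCc, hD𝒱⟩
      -- minimal element of the finite sub-chain
      obtain ⟨Cm, hCm, hCmmin⟩ := Set.Finite.exists_minimalFor id c' hc'fin hc'ne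
      have hCmle : ∀ C ∈ c', Cm ⊆ C := by
        intro C hC
        rcases hchain.total hCm.1 hC.1 with h | h
        · exact h
        · exact hCmmin hC h
      -- W (n+1) ⊆ Cmᶜ
      have hWsub : W (n + 1) ⊆ Cmᶜ := by
        intro x hx
        obtain ⟨D, hD𝒱, hxD⟩ := h𝒱cov hx
        obtain ⟨C, hCc, rfl⟩ := h𝒱sub hD𝒱
        intro hxCm
        exact hxD (hCmle C ⟨hCc, hD𝒱⟩ hxCm)
      obtain ⟨y, hy1, hy2⟩ := (hc𝒞 hCm.1).2.2 (n + 1)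
      exact hWsub hy2 hy1
  obtain ⟨A, -, hAminimal⟩ := zorn_superset_nonempty 𝒞 hzorn Vᶜ hseed
  have hAmem : A ∈ 𝒞 := hAminimal.1
  have hAmin : ∀ a ∈ 𝒞, a ⊆ A → a = A := fun a ha hsub' =>
    hsub'.antisymm (hAminimal.2 ha hsub')
  -- hAmem : A ∈ 𝒞, hAmin : ∀ a ∈ 𝒞, a ⊆ A → A ⊆ a (so a = A)
  obtain ⟨hAclosed, hAV, hAW⟩ := hAmem
  -- cofinality: every open meeting A contains a full trace
  have hcofin : ∀ O : Set X, IsOpen O → (O ∩ A).Nonempty → ∃ n, A ∩ W n ⊆ O := by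
    intro O hO hOA
    by_contra hno
    push_neg at hno
    have hG : A ∩ Oᶜ ∈ 𝒞 := by
      refine ⟨hAclosed.inter (isClosed_compl_iff.mpr hO), (inter_subset_left).trans hAV,
        fun n => ?_⟩
      obtain ⟨x, hx1, hx2⟩ := not_subset.mp (hno n)
      exact ⟨x, ⟨⟨hx1.1, hx2⟩, hx1.2⟩⟩
    have heq := hAmin _ hG inter_subset_left
    obtain ⟨x, hxO, hxA⟩ := hOA
    rw [← heq] at hxA
    exact hxA.2 hxO
  -- choose points in the traces
  have hyex : ∀ n, (A ∩ W n).Nonempty := hAW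
  choose y hy using hyex
  have hyA : ∀ n, y n ∈ A := fun n => (hy n).1
  have hyW : ∀ n, y n ∈ W n := fun n => (hy n).2
  -- the compact saturated "cones"
  set K : ℕ → Set X := fun j => OWFsat (OWFsat {y j} ∩ A) with hK
  have hKcomp : ∀ j, IsCompact (K j) := fun j =>
    OWFsat_compact ((OWFsat_compact isCompact_singleton).inter_right hAclosed)
  have hKsubW : ∀ j, K j ⊆ W j := fun j =>
    OWFsat_subset (hWo j)
      ((inter_subset_left).trans (OWFsat_subset (hWo j) (singleton_subset_iff.mpr (hyW j))))
  have hyK : ∀ j, y j ∈ K j := fun j =>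
    OWFsat_superset _ ⟨OWFsat_superset _ rfl, hyA j⟩
  have hKAcomp : ∀ j, IsCompact (K j ∩ A) := fun j => (hKcomp j).inter_right hAclosed
  -- trace detection: any open superset of K j contains a full trace
  have htrace : ∀ j (V' : Set X), IsOpen V' → K j ⊆ V' → ∃ k, A ∩ W k ⊆ V' := by
    intro j V' hV' hKV'
    obtain ⟨k, hk⟩ := hcofin (V' ∪ Aᶜ) (hV'.union hAclosed.isOpen_compl)
      ⟨y j, Or.inl (hKV' (hyK j)), hyA j⟩
    refine ⟨k, fun x hx => ?_⟩
    rcases hk hx with h | h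
    · exact h
    · exact absurd hx.1 h
  -- tail unions
  set P : ℕ → Set X := fun m => ⋃ j : ℕ, (K (m + j) ∩ A) with hP
  have hPmem : ∀ m j, K (m + j) ∩ A ⊆ P m := fun m j => subset_iUnion
    (fun j => K (m + j) ∩ A) j
  have hyP : ∀ m, y m ∈ P m := fun m => hPmem m 0 ⟨hyK m, hyA m⟩
  have hPsubW : ∀ m, P m ⊆ W m := by
    intro m x hx
    obtain ⟨j, hj⟩ := mem_iUnion.mp hx
    exact hanti (Nat.le_add_right m j) ((hKsubW (m + j)) hj.1)
  -- the crucial compactness of the tails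
  have hPcomp : ∀ m, IsCompact (P m) := by
    intro m
    apply OWF_isCompact_of_scover
    intro 𝒰 h𝒰 hcov
    -- finite subcover of K m ∩ A
    obtain ⟨𝒲₁, hW1sub, hW1fin, hW1cov⟩ := OWF_elim_scover (hKAcomp m) h𝒰
      ((hPmem m 0).trans hcov)
    -- the open (⋃₀𝒲₁) ∪ Aᶜ contains K m, hence a full trace
    have hVstar : IsOpen ((⋃₀ 𝒲₁) ∪ Aᶜ) :=
      (isOpen_sUnion fun U hU => h𝒰 U (hW1sub hU)).union hAclosed.isOpen_compl
    have hKmV : K m ⊆ (⋃₀ 𝒲₁) ∪ Aᶜ := by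
      intro x hx
      by_cases hxA : x ∈ A
      · exact Or.inl (hW1cov ⟨hx, hxA⟩)
      · exact Or.inr hxA
    obtain ⟨k, hkt⟩ := htrace m _ hVstar hKmV
    have hktW1 : A ∩ W k ⊆ ⋃₀ 𝒲₁ := by
      intro x hx
      rcases hkt hx with h | h
      · exact h
      · exact absurd hx.1 h
    -- middle pieces: for each j, a finite subcover
    have hmid : ∀ j : ℕ, ∃ 𝒢 : Set (Set X), 𝒢 ⊆ 𝒰 ∧ 𝒢.Finite ∧ K (m + j) ∩ A ⊆ ⋃₀ 𝒢 :=
      fun j => OWF_elim_scover (hKAcomp (m + j)) h𝒰 ((hPmem m j).trans hcov)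
    choose G hGsub hGfin hGcov using hmid
    refine ⟨𝒲₁ ∪ ⋃ j ∈ Iio k, G j, ?_, ?_, ?_⟩
    · apply union_subset hW1sub
      exact iUnion₂_subset fun j _ => hGsub j
    · exact hW1fin.union ((finite_Iio k).biUnion fun j _ => hGfin j)
    · intro x hx
      obtain ⟨j, hj⟩ := mem_iUnion.mp hx
      by_cases hjk : k ≤ m + j
      · -- deep tail: inside the trace at level k
        have hxAW : x ∈ A ∩ W k := ⟨hj.2, hanti hjk (hKsubW (m + j) hj.1)⟩
        obtain ⟨u, hu𝒲, hxu⟩ := hktW1 hxAW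
        exact ⟨u, Or.inl hu𝒲, hxu⟩
      · -- middle: use the chosen finite subcover for j
        push_neg at hjk
        have hjlt : j < k := lt_of_le_of_lt (Nat.le_add_left j m) hjk
        obtain ⟨u, hu, hxu⟩ := hGcov j hj
        exact ⟨u, Or.inr (mem_biUnion hjlt hu), hxu⟩
  -- final family for well-filteredness
  set S : ℕ → Set X := fun m => OWFsat (P m) with hS
  have hPanti : ∀ {m n : ℕ}, m ≤ n → P n ⊆ P m := by
    intro m n hmn x hx
    obtain ⟨j, hj⟩ := mem_iUnion.mp hx
    refine mem_iUnion.mpr ⟨(n - m) + j, ?_⟩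
    have : m + ((n - m) + j) = n + j := by omega
    rw [this]; exact hj
  have hSanti : ∀ {m n : ℕ}, m ≤ n → S n ⊆ S m := by
    intro m n hmn x hx
    exact mem_sInter.mpr fun U hU => mem_sInter.mp hx U ⟨hU.1, (hPanti hmn).trans hU.2⟩
  have hSsubW : ∀ m, S m ⊆ W m := fun m => OWFsat_subset (hWo m) (hPsubW m)
  obtain ⟨Kf, ⟨m, rfl⟩, hKfV⟩ := hWF (range S) (range_nonempty S)
    (by rintro _ ⟨m, rfl⟩; exact ⟨OWFsat_compact (hPcomp m), OWFsat_saturated _⟩)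
    (by
      rintro _ ⟨m, rfl⟩ _ ⟨n, rfl⟩
      exact ⟨S (max m n), mem_range_self _, hSanti (le_max_left m n),
        hSanti (le_max_right m n)⟩)
    V hV
    (by
      intro x hx
      have hxW : ∀ m, x ∈ W m := fun m =>
        hSsubW m (mem_sInter.mp hx (S m) (mem_range_self m))
      exact hsub (mem_iInter.mpr hxW))
  exact (hAV (hyA m)) (hKfV (OWFsat_superset _ (hyP m)))

end OWFHelpers



/-- Every well-filtered space is open well-filtered. -/
theorem stmt8 (X : Type*) [TopologicalSpace X] [T0Space X] (h : WellFiltered X) :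
    OpenWellFiltered X := by
  classical
  intro 𝒜 hne hopen hfilt U hU hsub
  -- choice function giving a common RelCpt-refinement of any two members
  have hstep : ∀ a b : {S : Set X // S ∈ 𝒜}, ∃ c : {S : Set X // S ∈ 𝒜},
      RelCpt c.1 a.1 ∧ RelCpt c.1 b.1 := by
    intro a b
    obtain ⟨C, hC, h1, h2⟩ := hfilt a.1 a.2 b.1 b.2
    exact ⟨⟨C, hC⟩, h1, h2⟩
  choose g hgl hgr using hstep
  -- descending chains below a given member
  have hchain_below : ∀ a : {S : Set X // S ∈ 𝒜}, ∃ σ : ℕ → {S : Set X // S ∈ 𝒜},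
      (∀ n, RelCpt (σ (n + 1)).1 (σ n).1) ∧ (σ 0).1 ⊆ a.1 := by
    intro a
    refine ⟨fun n => (fun t => g t t)^[n] (g a a), fun n => ?_, (hgl a a).1⟩
    show RelCpt ((fun t => g t t)^[n + 1] (g a a)).1 ((fun t => g t t)^[n] (g a a)).1
    rw [Function.iterate_succ_apply']
    exact hgl _ _
  -- interleaving two chains
  have hinter : ∀ σ τ : ℕ → {S : Set X // S ∈ 𝒜}, ∃ ρ : ℕ → {S : Set X // S ∈ 𝒜},
      (∀ n, RelCpt (ρ (n + 1)).1 (ρ n).1) ∧ (∀ n, (ρ n).1 ⊆ (σ n).1) ∧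
      (∀ n, (ρ n).1 ⊆ (τ n).1) := by
    intro σ τ
    refine ⟨fun n => Nat.rec (g (σ 0) (τ 0))
      (fun n ρn => g ρn (g (σ (n + 1)) (τ (n + 1)))) n, fun n => ?_, fun n => ?_, fun n => ?_⟩
    · exact hgl _ _
    · cases n with
      | zero => exact (hgl _ _).1
      | succ n => exact ((hgr _ _).1).trans (hgl _ _).1
    · cases n with
      | zero => exact (hgr _ _).1
      | succ n => exact ((hgr _ _).1).trans (hgr _ _).1
  -- basic facts about chain intersections
  have hKcpt : ∀ (σ : ℕ → {S : Set X // S ∈ 𝒜}), (∀ n, RelCpt (σ (n + 1)).1 (σ n).1) →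
      IsCompact (⋂ n, (σ n).1) := by
    intro σ hσ
    apply OWF_isCompact_of_scover
    intro 𝒰 h𝒰 hcov
    obtain ⟨n, hn⟩ := OWF_omega h (fun n => (σ n).1) (fun n => hopen _ (σ n).2) hσ
      (⋃₀ 𝒰) (isOpen_sUnion h𝒰) hcov
    obtain ⟨𝒱, h1, h2, h3⟩ := (hσ n).2 𝒰 h𝒰 hn
    exact ⟨𝒱, h1, h2, (iInter_subset (fun n => (σ n).1) (n + 1)).trans h3⟩
  have hKsat : ∀ (σ : ℕ → {S : Set X // S ∈ 𝒜}), Saturated (⋂ n, (σ n).1) := by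
    intro σ
    apply Set.Subset.antisymm
    · intro x hx
      exact mem_sInter.mpr fun V hV => hV.2 hx
    · intro x hx
      refine mem_iInter.mpr fun n => ?_
      exact mem_sInter.mp hx (σ n).1 ⟨hopen _ (σ n).2, iInter_subset _ n⟩
  -- apply well-filteredness to the family of chain intersections
  obtain ⟨K, hK𝒦, hKU⟩ := h
    {K | ∃ σ : ℕ → {S : Set X // S ∈ 𝒜},
      (∀ n, RelCpt (σ (n + 1)).1 (σ n).1) ∧ K = ⋂ n, (σ n).1}
    (by
      obtain ⟨A₀, hA₀⟩ := hne
      obtain ⟨σ, hσ, -⟩ := hchain_below ⟨A₀, hA₀⟩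
      exact ⟨⋂ n, (σ n).1, σ, hσ, rfl⟩)
    (by
      rintro K ⟨σ, hσ, rfl⟩
      exact ⟨hKcpt σ hσ, hKsat σ⟩)
    (by
      rintro K₁ ⟨σ, hσ, rfl⟩ K₂ ⟨τ, hτ, rfl⟩
      obtain ⟨ρ, hρchain, hρσ, hρτ⟩ := hinter σ τ
      exact ⟨⋂ n, (ρ n).1, ⟨ρ, hρchain, rfl⟩, iInter_mono fun n => hρσ n,
        iInter_mono fun n => hρτ n⟩)
    U hU
    (by
      intro x hx
      apply hsub
      refine mem_sInter.mpr fun A hA => ?_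
      obtain ⟨σ, hσ, hσ0⟩ := hchain_below ⟨A, hA⟩
      have hxK : x ∈ ⋂ n, (σ n).1 := mem_sInter.mp hx _ ⟨σ, hσ, rfl⟩
      exact hσ0 (mem_iInter.mp hxK 0))
  -- extract a member of 𝒜 inside U using the ω-lemma once more
  obtain ⟨σ, hσ, rfl⟩ := hK𝒦
  obtain ⟨n, hn⟩ := OWF_omega h (fun n => (σ n).1) (fun n => hopen _ (σ n).2) hσ U hU hKU
  exact ⟨(σ n).1, (σ n).2, hn⟩
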